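/- (Hamiltonian form of the τ-function identity.) Let a ∈ ℂ, let U ⊆ ℂ be open with 0 ∉ U, let (q₁, p₁, H₁) solve the Painlevé III′ Hamiltonian system with parameters (a − 1/2, a − 1/2) on U and (q₂, p₂, H₂) solve it with parameters (a + 1/2, a + 1/2) on U, and assume p₁(s), p₂(s) ∉ {0, 1} for all s ∈ U. Then there exist solutions (q̃₁, p̃₁) with parameters (−a + 1/2, a − 1/2) and (q̃₂, p̃₂) with parameters (−a − 1/2, a + 1/2) of the Painlevé III′ Hamiltonian system on −U := {−s : s ∈ U}, with Hamiltonians H̃₁, H̃₂, such that for all s ∈ U: −2s + s·H₁(s) + s·H₂(s) = (−s)·H̃₁(−s) + (−s)·H̃₂(−s). -/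
import Mathlib


open Complex

/-- `(q, p, H)` solves the Painlevé III′ Hamiltonian system with parameters
`v1, v2` on an open set `U ⊆ ℂ` with `0 ∉ U`. -/
def SolvesPIII' (v1 v2 : ℂ) (U : Set ℂ) (q p H : ℂ → ℂ) : Prop :=
  IsOpen U ∧ (0 : ℂ) ∉ U ∧
    DifferentiableOn ℂ q U ∧ DifferentiableOn ℂ p U ∧
    (∀ s ∈ U, s * H s =
      q s ^ 2 * p s ^ 2 - (q s ^ 2 + v1 * q s - s) * p s
        + (1 / 2) * (v1 + v2) * q s) ∧
    (∀ s ∈ U, s * deriv q s = 2 * q s ^ 2 * p s - q s ^ 2 - v1 * q s + s) ∧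
    (∀ s ∈ U, s * deriv p s =
      -2 * q s * p s ^ 2 + 2 * q s * p s + v1 * p s - (1 / 2) * (v1 + v2))

/-- The Bäcklund transformation `q̃(σ) = -q(-σ) + v·p(-σ)⁻¹`, `p̃(σ) = 1 - p(-σ)`,
`H̃(σ) = 1 - H(-σ)` maps a solution with parameters `(v, v)` on `U` to a solution
with parameters `(-v, v)` on `-U`. -/
lemma solvesPIII'_flip (v : ℂ) (U : Set ℂ) (q p H : ℂ → ℂ)
    (h : SolvesPIII' v v U q p H) (hp0 : ∀ s ∈ U, p s ≠ 0) :
    SolvesPIII' (-v) v {s : ℂ | -s ∈ U}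
      (fun σ => -q (-σ) + v * (p (-σ))⁻¹)
      (fun σ => 1 - p (-σ))
      (fun σ => 1 - H (-σ)) := by
  obtain ⟨hU, h0, hqd, hpd, hH, hq, hp⟩ := h
  have hUopen : IsOpen {s : ℂ | -s ∈ U} := hU.preimage continuous_neg
  have h0' : (0 : ℂ) ∉ {s : ℂ | -s ∈ U} := by
    simp only [Set.mem_setOf_eq, neg_zero]; exact h0
  have key : ∀ σ ∈ {s : ℂ | -s ∈ U},
      HasDerivAt (fun x => -q (-x) + v * (p (-x))⁻¹)
        (-(deriv q (-σ) * -1) + v * (-(deriv p (-σ) * -1) / p (-σ) ^ 2)) σ ∧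
      HasDerivAt (fun x => 1 - p (-x)) (-(deriv p (-σ) * -1)) σ := by
    intro σ hσ
    have hs : -σ ∈ U := hσ
    have hqa : DifferentiableAt ℂ q (-σ) := hqd.differentiableAt (hU.mem_nhds hs)
    have hpa : DifferentiableAt ℂ p (-σ) := hpd.differentiableAt (hU.mem_nhds hs)
    have hpne : p (-σ) ≠ 0 := hp0 _ hs
    have Hq2 : HasDerivAt (fun x => q (-x)) (deriv q (-σ) * -1) σ :=
      hqa.hasDerivAt.comp σ (hasDerivAt_neg σ)
    have Hp2 : HasDerivAt (fun x => p (-x)) (deriv p (-σ) * -1) σ :=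
      hpa.hasDerivAt.comp σ (hasDerivAt_neg σ)
    exact ⟨Hq2.neg.add ((Hp2.inv hpne).const_mul v), Hp2.const_sub 1⟩
  refine ⟨hUopen, h0', ?_, ?_, ?_, ?_, ?_⟩
  · exact fun σ hσ => ((key σ hσ).1).differentiableAt.differentiableWithinAt
  · exact fun σ hσ => ((key σ hσ).2).differentiableAt.differentiableWithinAt
  · intro σ hσ
    have hs : -σ ∈ U := hσ
    have hpne : p (-σ) ≠ 0 := hp0 _ hs
    have hσne : σ ≠ 0 := by
      intro h; apply h0; rw [h, neg_zero] at hs; exact hs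
    have hnσ : (-σ : ℂ) ≠ 0 := neg_ne_zero.mpr hσne
    have eH : H (-σ) =
        (q (-σ) ^ 2 * p (-σ) ^ 2 - (q (-σ) ^ 2 + v * q (-σ) - (-σ)) * p (-σ)
          + (1 / 2) * (v + v) * q (-σ)) / (-σ) := by
      rw [eq_div_iff hnσ]; linear_combination hH (-σ) hs
    simp only []
    rw [eH]
    field_simp
    ring
  · intro σ hσ
    have hs : -σ ∈ U := hσ
    have hpne : p (-σ) ≠ 0 := hp0 _ hs
    have hσne : σ ≠ 0 := by
      intro h; apply h0; rw [h, neg_zero] at hs; exact hs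
    have hnσ : (-σ : ℂ) ≠ 0 := neg_ne_zero.mpr hσne
    have edq : deriv q (-σ) =
        (2 * q (-σ) ^ 2 * p (-σ) - q (-σ) ^ 2 - v * q (-σ) + (-σ)) / (-σ) := by
      rw [eq_div_iff hnσ]; linear_combination hq (-σ) hs
    have edp : deriv p (-σ) =
        (-2 * q (-σ) * p (-σ) ^ 2 + 2 * q (-σ) * p (-σ) + v * p (-σ)
          - (1 / 2) * (v + v)) / (-σ) := by
      rw [eq_div_iff hnσ]; linear_combination hp (-σ) hs
    rw [((key σ hσ).1).deriv, edq, edp]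
    field_simp
    ring
  · intro σ hσ
    have hs : -σ ∈ U := hσ
    have hpne : p (-σ) ≠ 0 := hp0 _ hs
    have hσne : σ ≠ 0 := by
      intro h; apply h0; rw [h, neg_zero] at hs; exact hs
    have hnσ : (-σ : ℂ) ≠ 0 := neg_ne_zero.mpr hσne
    have edp : deriv p (-σ) =
        (-2 * q (-σ) * p (-σ) ^ 2 + 2 * q (-σ) * p (-σ) + v * p (-σ)
          - (1 / 2) * (v + v)) / (-σ) := by
      rw [eq_div_iff hnσ]; linear_combination hp (-σ) hs
    rw [((key σ hσ).2).deriv, edp]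
    field_simp
    ring

/-- Hamiltonian form of the τ-function identity: for Painlevé III′ solutions
with parameters `(a−1/2, a−1/2)` and `(a+1/2, a+1/2)` on `U`, there are
solutions with parameters `(−a+1/2, a−1/2)` and `(−a−1/2, a+1/2)` on `−U` whose
Hamiltonians satisfy
`−2s + s·H₁(s) + s·H₂(s) = (−s)·H̃₁(−s) + (−s)·H̃₂(−s)`. -/
theorem painleveIIIprime_hamiltonian_identity (a : ℂ) (U : Set ℂ)
    (q1 p1 H1 q2 p2 H2 : ℂ → ℂ)
    (hsol1 : SolvesPIII' (a - 1 / 2) (a - 1 / 2) U q1 p1 H1)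
    (hsol2 : SolvesPIII' (a + 1 / 2) (a + 1 / 2) U q2 p2 H2)
    (hp10 : ∀ s ∈ U, p1 s ≠ 0) (hp11 : ∀ s ∈ U, p1 s ≠ 1)
    (hp20 : ∀ s ∈ U, p2 s ≠ 0) (hp21 : ∀ s ∈ U, p2 s ≠ 1) :
    ∃ qt1 pt1 Ht1 qt2 pt2 Ht2 : ℂ → ℂ,
      SolvesPIII' (-a + 1 / 2) (a - 1 / 2) {s : ℂ | -s ∈ U} qt1 pt1 Ht1 ∧
      SolvesPIII' (-a - 1 / 2) (a + 1 / 2) {s : ℂ | -s ∈ U} qt2 pt2 Ht2 ∧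
      ∀ s ∈ U,
        -2 * s + s * H1 s + s * H2 s =
          (-s) * Ht1 (-s) + (-s) * Ht2 (-s) := by
  refine ⟨fun σ => -q1 (-σ) + (a - 1 / 2) * (p1 (-σ))⁻¹, fun σ => 1 - p1 (-σ),
    fun σ => 1 - H1 (-σ),
    fun σ => -q2 (-σ) + (a + 1 / 2) * (p2 (-σ))⁻¹, fun σ => 1 - p2 (-σ),
    fun σ => 1 - H2 (-σ), ?_, ?_, ?_⟩
  · have e : (-a + 1 / 2 : ℂ) = -(a - 1 / 2) := by ring
    rw [e]
    exact solvesPIII'_flip (a - 1 / 2) U q1 p1 H1 hsol1 hp10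
  · have e : (-a - 1 / 2 : ℂ) = -(a + 1 / 2) := by ring
    rw [e]
    exact solvesPIII'_flip (a + 1 / 2) U q2 p2 H2 hsol2 hp20
  · intro s hs
    simp only [neg_neg]
    ring
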